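/- Explicit sup-min formula for the finite-horizon safety value function: for every K : ℕ and x : X, V_K x = ⨆ (u : ℕ → U), min over k ∈ {0, 1, ..., K} of l (traj x u k). -/
import Mathlib

def traj {X U : Type*} (f : X → U → X) (x : X) (u : ℕ → U) : ℕ → X
  | 0 => x
  | k + 1 => f (traj f x u k) (u k)

noncomputable def safetyVal {X U : Type*} (f : X → U → X) (l : X → ℝ) : ℕ → X → ℝ
  | 0, x => l x
  | K + 1, x => min (l x) (⨆ u : U, safetyVal f l K (f x u))

lemma traj_shift {X U : Type*} (f : X → U → X) (x : X) (u : ℕ → U) (k : ℕ) :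
    traj f x u (k + 1) = traj f (f x (u 0)) (fun n => u (n + 1)) k := by
  induction k with
  | zero => rfl
  | succ k ih =>
    have h : traj f x u (k + 1 + 1) = f (traj f x u (k + 1)) (u (k + 1)) := rfl
    rw [h, ih]; rfl

lemma safetyVal_le_l {X U : Type*} [Nonempty U] (f : X → U → X) (l : X → ℝ)
    (K : ℕ) (x : X) : safetyVal f l K x ≤ l x := by
  cases K <;> simp [safetyVal]

lemma inf'_range_succ (g : ℕ → ℝ) (n : ℕ) :
    (Finset.range (n + 1 + 1)).inf' (by simp) g
      = min (g 0) ((Finset.range (n + 1)).inf' (by simp) (fun k => g (k + 1))) := by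
  apply le_antisymm
  · refine le_min (Finset.inf'_le _ (by simp)) (Finset.le_inf' _ _ fun k hk => ?_)
    exact Finset.inf'_le _ (by simp at hk ⊢; omega)
  · refine Finset.le_inf' _ _ fun k hk => ?_
    match k with
    | 0 => exact min_le_left _ _
    | k + 1 =>
      exact le_trans (min_le_right _ _) (Finset.inf'_le _ (by simp at hk ⊢; omega))

lemma ciSup_min_const {ι : Sort*} [Nonempty ι] (c : ℝ) (g : ι → ℝ)
    (hb : BddAbove (Set.range g)) :
    (⨆ i, min c (g i)) = min c (⨆ i, g i) :=
  ((Monotone.map_ciSup_of_continuousAt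
    ((continuous_const.min continuous_id).continuousAt)
    (fun _ _ hab => min_le_min le_rfl hab) hb)).symm

lemma ciSup_cons {U : Type*} [Nonempty U] (G : U → (ℕ → U) → ℝ) (M : ℝ)
    (hM : ∀ u us, G u us ≤ M) :
    (⨆ us : ℕ → U, G (us 0) (fun n => us (n + 1))) = ⨆ u : U, ⨆ us : ℕ → U, G u us := by
  have hbdd : ∀ u : U, BddAbove (Set.range fun us : ℕ → U => G u us) :=
    fun u => ⟨M, by rintro _ ⟨us, rfl⟩; exact hM u us⟩
  apply le_antisymm
  · refine ciSup_le fun us => ?_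
    refine le_trans (le_ciSup (hbdd (us 0)) (fun n => us (n + 1))) ?_
    refine le_ciSup (f := fun u => ⨆ us : ℕ → U, G u us) ?_ (us 0)
    exact ⟨M, by rintro _ ⟨u, rfl⟩; exact ciSup_le (hM u)⟩
  · refine ciSup_le fun u => ciSup_le fun us => ?_
    exact le_ciSup (f := fun vs : ℕ → U => G (vs 0) (fun n => vs (n + 1)))
      ⟨M, by rintro _ ⟨vs, rfl⟩; exact hM _ _⟩
      (fun n => Nat.casesOn n u fun k => us k)

theorem safetyVal_sup_min {X U : Type*} [Nonempty U] (f : X → U → X) (l : X → ℝ)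
    (hbdd : ∃ M : ℝ, ∀ x : X, l x ≤ M) (K : ℕ) (x : X) :
    safetyVal f l K x =
      ⨆ u : ℕ → U, (Finset.range (K + 1)).inf' (by simp) (fun k => l (traj f x u k)) := by
  obtain ⟨M, hM⟩ := hbdd
  induction K generalizing x with
  | zero => simp [safetyVal, traj]
  | succ K ih =>
    have hb : ∀ y : X, ∀ u : ℕ → U,
        (Finset.range (K + 1)).inf' (by simp) (fun k => l (traj f y u k)) ≤ M :=
      fun y u => le_trans (Finset.inf'_le _ (by simp : (0:ℕ) ∈ Finset.range (K+1))) (hM _)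
    have hsplit : ∀ u : ℕ → U,
        (Finset.range (K + 1 + 1)).inf' (by simp) (fun k => l (traj f x u k)) =
        min (l x) ((Finset.range (K + 1)).inf' (by simp)
          (fun k => l (traj f (f x (u 0)) (fun n => u (n + 1)) k))) := by
      intro u
      rw [inf'_range_succ]
      congr 1
      exact Finset.inf'_congr (by simp) rfl (fun k _ => by rw [traj_shift])
    have hbV : BddAbove (Set.range fun u : U => safetyVal f l K (f x u)) :=
      ⟨M, by rintro _ ⟨u, rfl⟩; exact le_trans (safetyVal_le_l f l K _) (hM _)⟩
    calc safetyVal f l (K + 1) x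
        = min (l x) (⨆ u : U, safetyVal f l K (f x u)) := rfl
      _ = ⨆ u : U, min (l x) (safetyVal f l K (f x u)) := (ciSup_min_const _ _ hbV).symm
      _ = ⨆ u : U, ⨆ us : ℕ → U, min (l x)
            ((Finset.range (K + 1)).inf' (by simp) (fun k => l (traj f (f x u) us k))) := by
          refine iSup_congr fun u => ?_
          rw [ih, ciSup_min_const _ _ ⟨M, by rintro _ ⟨us, rfl⟩; exact hb _ us⟩]
      _ = ⨆ us : ℕ → U, min (l x)
            ((Finset.range (K + 1)).inf' (by simp)
              (fun k => l (traj f (f x (us 0)) (fun n => us (n + 1)) k))) :=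
          (ciSup_cons (fun v us => min (l x)
            ((Finset.range (K + 1)).inf' (by simp) (fun k => l (traj f (f x v) us k)))) M
            (fun v us => le_trans (min_le_right _ _) (hb _ _))).symm
      _ = ⨆ u : ℕ → U, (Finset.range (K + 1 + 1)).inf' (by simp)
            (fun k => l (traj f x u k)) := (iSup_congr hsplit).symm
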